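/- Suppose n is even, assumption (A6) holds, and the leakiness α_i := lim_{x→∞} a_i(x) is strictly positive for every i = 1,…,n. Then the generalized n-gene repressilator has at least one steady state in (0,∞)^{2n} (the central steady state E_C exists). -/

import Mathlib

private lemma exists_preimage' {f : ℝ → ℝ} {X y : ℝ}
    (hc : ContinuousOn f (Set.Ici 0))
    (_hm : StrictMonoOn f (Set.Ici 0))
    (h0 : f 0 = 0) (hX : 0 ≤ X)
    (hy0 : 0 < y) (hyX : y ≤ f X) :
    ∃ x, 0 < x ∧ x ≤ X ∧ f x = y := by
  have hsub : Set.Icc (0:ℝ) X ⊆ Set.Ici 0 := Set.Icc_subset_Ici_self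
  obtain ⟨x, hx, hfx⟩ := intermediate_value_Icc hX (hc.mono hsub)
    (by rw [h0]; exact ⟨hy0.le, hyX⟩)
  refine ⟨x, ?_, hx.2, hfx⟩
  rcases hx.1.eq_or_lt with h | h
  · exfalso
    rw [← h, h0] at hfx
    exact hy0.ne' hfx.symm
  · exact h

/-- Iterated composition of a sequence of maps. -/
def iterMap (g : ℕ → ℝ → ℝ) : ℕ → ℝ → ℝ
  | 0, x => x
  | (j+1), x => g j (iterMap g j x)

@[simp] lemma iterMap_zero (g : ℕ → ℝ → ℝ) (x : ℝ) : iterMap g 0 x = x := rfl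

@[simp] lemma iterMap_succ (g : ℕ → ℝ → ℝ) (j : ℕ) (x : ℝ) :
    iterMap g (j+1) x = g j (iterMap g j x) := rfl

/-- A steady state of the generalized `n`-gene repressilator. -/
def IsSteadyState (n : ℕ) [NeZero n] (a dr dp k : Fin n → ℝ → ℝ)
    (r p : Fin n → ℝ) : Prop :=
  (∀ i, 0 < r i) ∧ (∀ i, 0 < p i) ∧
    (∀ i, dr i (r i) = a i (p (i - 1))) ∧ (∀ i, dp i (p i) = k i (r i))

/-- For `n` even, under the standing assumptions (A1)–(A4) and (D1)–(D3), together
with (A6) and strictly positive leakiness `α i = lim_{x→∞} a i x > 0` for all `i`,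
the generalized `n`-gene repressilator has at least one steady state in
`(0,∞)^{2n}` (the central steady state `E_C` exists). -/
theorem even_exists_steady_state_of_leaky (n : ℕ) [NeZero n] (hn : Even n)
    (a dr dp k : Fin n → ℝ → ℝ)
    (hA1 : ∀ i, ContDiffOn ℝ 1 (a i) (Set.Ici 0))
    (hA2 : ∀ i, ∀ x ≥ (0 : ℝ), 0 ≤ a i x)
    (hA3 : ∀ i, StrictAntiOn (a i) (Set.Ici 0))
    (hA4 : ∀ i, 0 < a i 0)
    (hD1 : ∀ i, ContDiffOn ℝ 1 (dr i) (Set.Ici 0) ∧ ContDiffOn ℝ 1 (dp i) (Set.Ici 0) ∧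
      ContDiffOn ℝ 1 (k i) (Set.Ici 0))
    (hD2 : ∀ i, dr i 0 = 0 ∧ dp i 0 = 0 ∧ k i 0 = 0)
    (hD3 : ∀ i, StrictMonoOn (dr i) (Set.Ici 0) ∧ StrictMonoOn (dp i) (Set.Ici 0) ∧
      StrictMonoOn (k i) (Set.Ici 0))
    -- the leakiness `α i := lim_{x→∞} a i x` is strictly positive
    (α : Fin n → ℝ) (hα : ∀ i, Filter.Tendsto (a i) Filter.atTop (nhds (α i)))
    (hαpos : ∀ i, 0 < α i)
    -- `rbar i` is the unique point in `(0,∞)` with `dr i (rbar i) = a i 0`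
    (rbar : Fin n → ℝ) (hrbar_pos : ∀ i, 0 < rbar i)
    (hrbar : ∀ i, dr i (rbar i) = a i 0)
    -- (A6)
    (hA6 : ∀ i, (∃ x ≥ (0 : ℝ), dr i x > a i 0) ∧ (∃ x ≥ (0 : ℝ), dp i x > k i (rbar i))) :
    ∃ r p : Fin n → ℝ, IsSteadyState n a dr dp k r p := by
  classical
  have npos : 0 < n := Nat.pos_of_ne_zero (NeZero.ne n)
  obtain ⟨m, rfl⟩ : ∃ m, n = m + 1 := ⟨n - 1, (Nat.succ_pred_eq_of_pos npos).symm⟩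
  have hdrC : ∀ i, ContinuousOn (dr i) (Set.Ici 0) := fun i => ((hD1 i).1).continuousOn
  have hdpC : ∀ i, ContinuousOn (dp i) (Set.Ici 0) := fun i => ((hD1 i).2.1).continuousOn
  have ha_le : ∀ i (x : ℝ), 0 ≤ x → a i x ≤ a i 0 := fun i x hx =>
    (hA3 i).antitoneOn (Set.mem_Ici.2 le_rfl) (Set.mem_Ici.2 hx) hx
  have ha_ge : ∀ i (x : ℝ), 0 ≤ x → α i ≤ a i x := by
    intro i x hx
    refine le_of_tendsto (hα i) ?_
    filter_upwards [Filter.eventually_ge_atTop x] with t ht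
    exact (hA3 i).antitoneOn (Set.mem_Ici.2 hx) (Set.mem_Ici.2 (hx.trans ht)) ht
  have ha_pos : ∀ i (x : ℝ), 0 ≤ x → 0 < a i x := fun i x hx =>
    (hαpos i).trans_le (ha_ge i x hx)
  -- Y i from (A6)
  choose Y hY0 hYgt using fun i => (hA6 i).2
  have hk_pos : ∀ i (r : ℝ), 0 < r → 0 < k i r := by
    intro i r hr
    have := (hD3 i).2.2 (Set.mem_Ici.2 le_rfl) (Set.mem_Ici.2 hr.le) hr
    rwa [(hD2 i).2.2] at this
  have hYpos : ∀ i, 0 < Y i := by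
    intro i
    rcases (hY0 i).eq_or_lt with h | h
    · exfalso
      have := hYgt i
      rw [← h, (hD2 i).2.1] at this
      exact absurd this (not_lt.2 (hk_pos i _ (hrbar_pos i)).le)
    · exact h
  -- inverse of dr on (0, rbar i]
  have hRex : ∀ i (x : ℝ), ∃ r, 0 ≤ x → (0 < r ∧ r ≤ rbar i ∧ dr i r = a i x) := by
    intro i x
    by_cases hx : 0 ≤ x
    · obtain ⟨r, h1, h2, h3⟩ := exists_preimage' (hdrC i) (hD3 i).1 (hD2 i).1
        (hrbar_pos i).le (ha_pos i x hx) (by rw [hrbar i]; exact ha_le i x hx)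
      exact ⟨r, fun _ => ⟨h1, h2, h3⟩⟩
    · exact ⟨0, fun h => absurd h hx⟩
  choose R hR using hRex
  -- inverse of dp on (0, Y i]
  have hPex : ∀ i (r : ℝ), ∃ p, (0 < r ∧ r ≤ rbar i) → (0 < p ∧ p ≤ Y i ∧ dp i p = k i r) := by
    intro i r
    by_cases hr : 0 < r ∧ r ≤ rbar i
    · have hkle : k i r ≤ k i (rbar i) :=
        ((hD3 i).2.2).monotoneOn (Set.mem_Ici.2 hr.1.le)
          (Set.mem_Ici.2 (hrbar_pos i).le) hr.2
      obtain ⟨p, h1, h2, h3⟩ := exists_preimage' (hdpC i) (hD3 i).2.1 (hD2 i).2.1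
        (hY0 i) (hk_pos i r hr.1) (hkle.trans (hYgt i).le)
      exact ⟨p, fun _ => ⟨h1, h2, h3⟩⟩
    · exact ⟨0, fun h => absurd h hr⟩
  choose P hP using hPex
  set gf : Fin (m + 1) → ℝ → ℝ := fun i x => P i (R i x) with hgf
  have hg : ∀ i (x : ℝ), 0 ≤ x →
      0 < gf i x ∧ gf i x ≤ Y i ∧ dp i (gf i x) = k i (R i x) ∧
      0 < R i x ∧ R i x ≤ rbar i ∧ dr i (R i x) = a i x := by
    intro i x hx
    obtain ⟨hr1, hr2, hr3⟩ := hR i x hx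
    obtain ⟨hp1, hp2, hp3⟩ := hP i (R i x) ⟨hr1, hr2⟩
    exact ⟨hp1, hp2, hp3, hr1, hr2, hr3⟩
  have hganti : ∀ i (x x' : ℝ), 0 ≤ x → x ≤ x' → gf i x' ≤ gf i x := by
    intro i x x' hx hxx
    have hx' : 0 ≤ x' := hx.trans hxx
    obtain ⟨hp1, _, hp3, hr1, _, hr3⟩ := hg i x hx
    obtain ⟨hp1', _, hp3', hr1', _, hr3'⟩ := hg i x' hx'
    have haa : a i x' ≤ a i x :=
      (hA3 i).antitoneOn (Set.mem_Ici.2 hx) (Set.mem_Ici.2 hx') hxx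
    have hRle : R i x' ≤ R i x :=
      ((hD3 i).1.le_iff_le (Set.mem_Ici.2 hr1'.le) (Set.mem_Ici.2 hr1.le)).1
        (by rw [hr3, hr3']; exact haa)
    have hkle : k i (R i x') ≤ k i (R i x) :=
      ((hD3 i).2.2).monotoneOn (Set.mem_Ici.2 hr1'.le) (Set.mem_Ici.2 hr1.le) hRle
    exact ((hD3 i).2.1.le_iff_le (Set.mem_Ici.2 hp1'.le) (Set.mem_Ici.2 hp1.le)).1
      (by rw [hp3, hp3']; exact hkle)
  set g' : ℕ → ℝ → ℝ := fun j => gf (Fin.ofNat (m + 1) j) with hg'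
  -- nonnegativity along iterates
  have hF0 : ∀ (j : ℕ) (x : ℝ), 0 ≤ x → 0 ≤ iterMap g' j x := by
    intro j
    induction j with
    | zero => intro x hx; simpa using hx
    | succ m ih =>
      intro x hx
      simp only [iterMap_succ]
      exact (hg _ _ (ih x hx)).1.le
  -- parity monotonicity
  have hFmono : ∀ (j : ℕ) (x x' : ℝ), 0 ≤ x → x ≤ x' →
      (Even j → iterMap g' j x ≤ iterMap g' j x') ∧
      (¬ Even j → iterMap g' j x' ≤ iterMap g' j x) := by
    intro j
    induction j with
    | zero =>
      intro x x' hx hxx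
      exact ⟨fun _ => by simpa using hxx, fun h => absurd Even.zero h⟩
    | succ m ih =>
      intro x x' hx hxx
      have hx' : 0 ≤ x' := hx.trans hxx
      have h1 := ih x x' hx hxx
      constructor
      · intro hev
        have hm : ¬ Even m := by
          rw [Nat.even_add_one] at hev; exact hev
        simp only [iterMap_succ]
        exact hganti _ _ _ (hF0 m x' hx') (h1.2 hm)
      · intro hodd
        have hm : Even m := by
          rw [Nat.even_add_one, not_not] at hodd; exact hodd
        simp only [iterMap_succ]
        exact hganti _ _ _ (hF0 m x hx) (h1.1 hm)
  set M : ℝ := Y (Fin.ofNat (m + 1) m) with hM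
  have hGmem : ∀ x : ℝ, 0 ≤ x → 0 < iterMap g' (m + 1) x ∧ iterMap g' (m + 1) x ≤ M := by
    intro x hx
    rw [iterMap_succ]
    exact ⟨(hg _ _ (hF0 m x hx)).1, (hg _ _ (hF0 m x hx)).2.1⟩
  have hMpos : 0 < M := hYpos _
  set s : Set ℝ := {x | 0 ≤ x ∧ x ≤ M ∧ x ≤ iterMap g' (m + 1) x} with hs
  have h0s : (0:ℝ) ∈ s := ⟨le_rfl, hMpos.le, (hGmem 0 le_rfl).1.le⟩
  have hbdd : BddAbove s := ⟨M, fun x hx => hx.2.1⟩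
  set q : ℝ := sSup s with hqdef
  have hq0 : 0 ≤ q := le_csSup hbdd h0s
  have hqle : q ≤ iterMap g' (m + 1) q := by
    apply csSup_le ⟨0, h0s⟩
    intro x hx
    exact hx.2.2.trans ((hFmono (m + 1) x q hx.1 (le_csSup hbdd hx)).1 hn)
  have hfix : iterMap g' (m + 1) q = q := by
    refine le_antisymm (le_csSup hbdd ?_) hqle
    exact ⟨(hGmem q hq0).1.le, (hGmem q hq0).2, (hFmono (m + 1) q _ hq0 hqle).1 hn⟩
  have key : ∀ i : Fin (m + 1), iterMap g' (i.val + 1) q = gf i (iterMap g' i.val q) := by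
    intro i
    simp only [iterMap_succ, hg', Fin.ofNat_val_eq_self]
  -- build the steady state
  refine ⟨fun i => R i (iterMap g' i.val q), fun i => iterMap g' (i.val + 1) q, ?_, ?_, ?_, ?_⟩
  · intro i
    exact (hg i _ (hF0 _ q hq0)).2.2.2.1
  · intro i
    show 0 < iterMap g' (i.val + 1) q
    rw [key i]
    exact (hg i _ (hF0 _ q hq0)).1
  · intro i
    show dr i (R i (iterMap g' i.val q)) = a i (iterMap g' ((i - 1).val + 1) q)
    rw [(hg i (iterMap g' i.val q) (hF0 _ q hq0)).2.2.2.2.2]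
    congr 1
    by_cases hi : i = 0
    · subst hi
      have hval : ((0 : Fin (m + 1)) - 1).val = m := by
        rw [Fin.coe_sub_one, if_pos rfl]
      rw [hval, hfix]
      rfl
    · have hival : i.val ≠ 0 := fun h => hi (Fin.ext h)
      have hval : (i - 1).val = i.val - 1 := by
        rw [Fin.coe_sub_one, if_neg hi]
      rw [hval, Nat.sub_add_cancel (Nat.one_le_iff_ne_zero.2 hival)]
  · intro i
    show dp i (iterMap g' (i.val + 1) q) = k i (R i (iterMap g' i.val q))
    rw [key i]
    exact (hg i _ (hF0 _ q hq0)).2.2.1
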